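/- arXiv:2009.08479 — 2 statements merged into one kernel-verified Lean document; each statement's English description precedes it below -/
import Mathlib

section
/- Let H be a finite simple graph with m ≥ 2 edges, let ℓ ≥ 1 be a real number, and let S and T be nonempty sets of vertices of H such that every path in H from a vertex of S to a vertex of T has length greater than ℓ (in particular, this holds if no vertex of S is connected to any vertex of T). Then there exists a set Z ⊆ V(H) with vol_H(Z) ≤ vol(H)/2 and δ_H(Z) ≤ (8·log₂ m/ℓ)·vol_H(Z), such that S ⊆ Z or T ⊆ Z. -/
open Finset
open scoped Classical

noncomputable section

variable {V : Type*} [Fintype V]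

/-- The degree of the vertex `v` in the graph `G`. -/
def gdeg (G : SimpleGraph V) (v : V) : ℕ :=
  (Finset.univ.filter fun u => G.Adj v u).card

/-- The volume of a vertex set `S` in `G`: the sum of degrees of its vertices. -/
def gvol (G : SimpleGraph V) (S : Finset V) : ℕ := ∑ v ∈ S, gdeg G v

/-- The number of edges of `G` with exactly one endpoint in `S`. -/
def gcut (G : SimpleGraph V) (S : Finset V) : ℕ :=
  (Finset.univ.filter fun p : V × V => p.1 ∈ S ∧ p.2 ∉ S ∧ G.Adj p.1 p.2).card

/-- The number of edges of `G`. -/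
def edgeCount (G : SimpleGraph V) : ℕ :=
  (Finset.univ.filter fun p : V × V => G.Adj p.1 p.2).card / 2

/-! ### Auxiliary lemmas -/

lemma gvol_mono (G : SimpleGraph V) {Z W : Finset V} (h : Z ⊆ W) : gvol G Z ≤ gvol G W :=
  Finset.sum_le_sum_of_subset h

lemma gcut_le_sum_aux (G : SimpleGraph V) (Z N : Finset V)
    (h : ∀ p : V × V, p.1 ∈ Z → p.2 ∉ Z → G.Adj p.1 p.2 → p.2 ∈ N) :
    gcut G Z ≤ gvol G N := by
  unfold gcut gvol gdeg
  rw [Finset.card_eq_sum_card_fiberwise (f := Prod.snd) (t := N) (fun p hp => by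
    obtain ⟨-, h1, h2, h3⟩ := Finset.mem_filter.1 hp
    exact h p h1 h2 h3)]
  refine Finset.sum_le_sum fun v hv => ?_
  refine Finset.card_le_card_of_injOn (fun p => p.1) ?_ ?_
  · intro p hp
    simp only [Finset.mem_coe, Finset.mem_filter, Finset.mem_univ, true_and] at hp ⊢
    obtain ⟨⟨h1, h2, h3⟩, h4⟩ := hp
    exact (h4 ▸ h3).symm
  · intro p hp q hq hpq
    simp only [Finset.coe_filter, Set.mem_setOf_eq] at hp hq
    exact Prod.ext hpq (hp.2.trans hq.2.symm)

lemma gcut_le_gvol (G : SimpleGraph V) (Z : Finset V) : gcut G Z ≤ gvol G Z := by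
  unfold gcut gvol gdeg
  rw [Finset.card_eq_sum_card_fiberwise (f := Prod.fst) (t := Z) (fun p hp => by
    obtain ⟨-, h1, h2, h3⟩ := Finset.mem_filter.1 hp
    exact h1)]
  refine Finset.sum_le_sum fun v hv => ?_
  refine Finset.card_le_card_of_injOn (fun p => p.2) ?_ ?_
  · intro p hp
    simp only [Finset.mem_coe, Finset.mem_filter, Finset.mem_univ, true_and] at hp ⊢
    obtain ⟨⟨h1, h2, h3⟩, h4⟩ := hp
    exact h4 ▸ h3
  · intro p hp q hq hpq
    simp only [Finset.coe_filter, Set.mem_setOf_eq] at hp hq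
    exact Prod.ext (hp.2.trans hq.2.symm) hpq

lemma pairs_card (G : SimpleGraph V) (Z : Finset V) :
    (Finset.univ.filter fun p : V × V => p.1 ∈ Z ∧ G.Adj p.1 p.2).card = gvol G Z := by
  unfold gvol gdeg
  rw [Finset.card_eq_sum_card_fiberwise (f := Prod.fst) (t := Z) (fun p hp =>
    (Finset.mem_filter.1 hp).2.1)]
  refine Finset.sum_congr rfl fun v hv => ?_
  refine Finset.card_bij (fun p _ => p.2) ?_ ?_ ?_
  · intro p hp
    simp only [Finset.mem_filter, Finset.mem_univ, true_and] at hp ⊢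
    exact hp.2 ▸ hp.1.2
  · intro p hp q hq hpq
    simp only [Finset.mem_filter, Finset.mem_univ, true_and] at hp hq
    exact Prod.ext (hp.2.trans hq.2.symm) hpq
  · intro u hu
    simp only [Finset.mem_filter, Finset.mem_univ, true_and] at hu
    exact ⟨(v, u), by simp [hv, hu], rfl⟩

lemma gvol_univ_eq (G : SimpleGraph V) : gvol G Finset.univ = 2 * edgeCount G := by
  have h1 : (Finset.univ.filter fun p : V × V => G.Adj p.1 p.2).card = gvol G Finset.univ := by
    rw [← pairs_card G Finset.univ]
    congr 1
    ext p
    simp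
  have h2 : gvol G Finset.univ = 2 * G.edgeFinset.card := by
    unfold gvol
    rw [← SimpleGraph.sum_degrees_eq_twice_card_edges]
    refine Finset.sum_congr rfl fun v _ => ?_
    unfold gdeg
    rw [← SimpleGraph.card_neighborFinset_eq_degree, SimpleGraph.neighborFinset_eq_filter]
  unfold edgeCount
  rw [h1, h2]
  omega

/-- The ball of radius `i` around the set `A`. -/
def ball (G : SimpleGraph V) (A : Finset V) (i : ℕ) : Finset V :=
  Finset.univ.filter fun v => ∃ a ∈ A, ∃ w : G.Walk a v, w.length ≤ i

lemma subset_ball (G : SimpleGraph V) (A : Finset V) (i : ℕ) : A ⊆ ball G A i := by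
  intro a ha
  exact Finset.mem_filter.2 ⟨Finset.mem_univ _, a, ha, SimpleGraph.Walk.nil, by simp⟩

lemma ball_mono (G : SimpleGraph V) (A : Finset V) {i j : ℕ} (h : i ≤ j) :
    ball G A i ⊆ ball G A j := by
  intro v hv
  obtain ⟨-, a, ha, w, hw⟩ := Finset.mem_filter.1 hv
  exact Finset.mem_filter.2 ⟨Finset.mem_univ _, a, ha, w, hw.trans h⟩

lemma ball_succ (G : SimpleGraph V) (A : Finset V) {i : ℕ} {u v : V}
    (hu : u ∈ ball G A i) (h : G.Adj u v) : v ∈ ball G A (i + 1) := by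
  obtain ⟨-, a, ha, w, hw⟩ := Finset.mem_filter.1 hu
  refine Finset.mem_filter.2 ⟨Finset.mem_univ _, a, ha, w.concat h, ?_⟩
  rw [SimpleGraph.Walk.length_concat]
  omega

lemma vol_ball_succ (G : SimpleGraph V) (A : Finset V) (i : ℕ) :
    gvol G (ball G A i) + gcut G (ball G A i) ≤ gvol G (ball G A (i + 1)) := by
  have h1 : gcut G (ball G A i) ≤ gvol G (ball G A (i + 1) \ ball G A i) :=
    gcut_le_sum_aux G _ _ (fun p h1 h2 h3 =>
      Finset.mem_sdiff.2 ⟨ball_succ G A h1 h3, h2⟩)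
  have h2 : gvol G (ball G A i) + gvol G (ball G A (i + 1) \ ball G A i)
      = gvol G (ball G A (i + 1)) := by
    unfold gvol
    rw [add_comm, Finset.sum_sdiff (ball_mono G A (Nat.le_succ i))]
  omega

lemma side (H : SimpleGraph V) (m : ℕ) (hm : 2 ≤ m)
    (hvolU : gvol H Finset.univ = 2 * m)
    (ℓ : ℝ) (hℓ : 8 * Real.logb 2 m < ℓ)
    (A : Finset V) (k : ℕ) (hk : ℓ / 2 < (k : ℝ) + 1)
    (hvol : (gvol H (ball H A k) : ℝ) ≤ (gvol H Finset.univ : ℝ) / 2) :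
    ∃ Z : Finset V,
      (gvol H Z : ℝ) ≤ (gvol H Finset.univ : ℝ) / 2 ∧
      (gcut H Z : ℝ) ≤ 8 * Real.logb 2 m / ℓ * (gvol H Z : ℝ) ∧
      A ⊆ Z := by
  have hm2 : (2 : ℝ) ≤ (m : ℝ) := by exact_mod_cast hm
  have hL1 : (1 : ℝ) ≤ Real.logb 2 m := by
    rw [show (1 : ℝ) = Real.logb 2 2 from (Real.logb_self_eq_one (by norm_num)).symm]
    exact Real.logb_le_logb_of_le (by norm_num) (by norm_num) hm2
  have hℓ0 : (0 : ℝ) < ℓ := by linarith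
  set α := 8 * Real.logb 2 m / ℓ with hαdef
  have hα0 : (0 : ℝ) < α := div_pos (by linarith) hℓ0
  have hα1 : α < 1 := by rw [hαdef, div_lt_one hℓ0]; exact hℓ
  by_contra hcon
  push_neg at hcon
  have hfail : ∀ i, i ≤ k → α * (gvol H (ball H A i) : ℝ) < (gcut H (ball H A i) : ℝ) := by
    intro i hi
    by_contra hle
    push_neg at hle
    have hvoli : (gvol H (ball H A i) : ℝ) ≤ (gvol H Finset.univ : ℝ) / 2 := by
      refine le_trans ?_ hvol
      exact_mod_cast gvol_mono H (ball_mono H A hi)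
    exact hcon (ball H A i) hvoli hle (subset_ball H A i)
  have h0 : 1 ≤ gvol H (ball H A 0) := by
    by_contra h
    push_neg at h
    have h0' : gvol H (ball H A 0) = 0 := by omega
    have hcut : gcut H (ball H A 0) = 0 := by
      have := gcut_le_gvol H (ball H A 0); omega
    have := hfail 0 (Nat.zero_le _)
    rw [h0', hcut] at this
    simp at this
  have hgrow : ∀ i, i ≤ k + 1 → (1 + α) ^ i ≤ (gvol H (ball H A i) : ℝ) := by
    intro i
    induction i with
    | zero => intro _; simpa using (by exact_mod_cast h0 : (1 : ℝ) ≤ gvol H (ball H A 0))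
    | succ n ih =>
      intro hn
      have hv := ih (by omega)
      have hstep := vol_ball_succ H A n
      have hf := hfail n (by omega)
      have hstep' : (gvol H (ball H A n) : ℝ) + (gcut H (ball H A n) : ℝ)
          ≤ (gvol H (ball H A (n + 1)) : ℝ) := by exact_mod_cast hstep
      have hpow : (0 : ℝ) ≤ (1 + α) ^ n := pow_nonneg (by linarith) n
      calc (1 + α) ^ (n + 1) = (1 + α) ^ n * (1 + α) := pow_succ _ _
        _ ≤ (gvol H (ball H A n) : ℝ) * (1 + α) := by
            apply mul_le_mul_of_nonneg_right hv (by linarith)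
        _ = (gvol H (ball H A n) : ℝ) + α * (gvol H (ball H A n) : ℝ) := by ring
        _ ≤ (gvol H (ball H A (n + 1)) : ℝ) := by linarith
  have hfin : (1 + α) ^ (k + 1) ≤ 2 * (m : ℝ) := by
    have h1 := hgrow (k + 1) le_rfl
    have h2 : (gvol H (ball H A (k + 1)) : ℝ) ≤ (gvol H Finset.univ : ℝ) :=
      by exact_mod_cast gvol_mono H (Finset.subset_univ _)
    rw [hvolU] at h2
    push_cast at h2
    linarith
  -- log inequalities
  have hlog1 : α / 2 ≤ Real.log (1 + α) := by
    have hx : (0 : ℝ) < (1 + α)⁻¹ := by positivity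
    have hls := Real.log_le_sub_one_of_pos hx
    rw [Real.log_inv] at hls
    have hinv : (1 + α)⁻¹ ≤ 1 - α / 2 := by
      rw [inv_eq_one_div, div_le_iff₀ (by linarith : (0 : ℝ) < 1 + α)]
      nlinarith
    linarith
  have hlogm : Real.log 2 ≤ Real.log m := Real.log_le_log (by norm_num) hm2
  have hlog2pos : (0 : ℝ) < Real.log 2 := Real.log_pos (by norm_num)
  have hlog2lt : Real.log 2 < 1 := by
    have := Real.log_two_lt_d9; linarith
  have hfin' : ((k : ℝ) + 1) * Real.log (1 + α) ≤ Real.log 2 + Real.log m := by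
    have hpos : (0 : ℝ) < (1 + α) ^ (k + 1) := pow_pos (by linarith) _
    have h := Real.log_le_log hpos hfin
    rw [Real.log_pow, Real.log_mul (by norm_num) (by positivity)] at h
    push_cast at h
    linarith
  have hlow : ℓ * α / 4 ≤ ((k : ℝ) + 1) * Real.log (1 + α) := by
    have h1 : (ℓ / 2) * (α / 2) ≤ ((k : ℝ) + 1) * Real.log (1 + α) :=
      mul_le_mul hk.le hlog1 (by positivity) (by positivity)
    linarith
  have hαℓ : ℓ * α = 8 * Real.logb 2 m := by
    rw [hαdef]; field_simp
  have hkey : 2 * Real.logb 2 m ≤ Real.log 2 + Real.log m := by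
    have h : ℓ * α / 4 = 2 * Real.logb 2 m := by rw [hαℓ]; ring
    linarith
  have hLdef : Real.logb 2 m = Real.log m / Real.log 2 := by rw [Real.logb]
  have hlogmpos : (0 : ℝ) < Real.log m := lt_of_lt_of_le hlog2pos hlogm
  rw [hLdef] at hkey
  have hmul := mul_le_mul_of_nonneg_right hkey hlog2pos.le
  rw [mul_comm (2 * (Real.log m / Real.log 2)) (Real.log 2)] at hmul
  have hcancel : Real.log 2 * (2 * (Real.log m / Real.log 2)) = 2 * Real.log m := by
    field_simp
  rw [hcancel] at hmul
  nlinarith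

/-- If `H` has `m ≥ 2` edges and `S`, `T` are nonempty vertex sets such that every
path in `H` from a vertex of `S` to a vertex of `T` has length greater than
`ℓ ≥ 1`, then there is a set `Z` with `vol_H(Z) ≤ vol(H)/2` and
`δ_H(Z) ≤ (8·log₂ m / ℓ)·vol_H(Z)`, containing `S` or containing `T`. -/
theorem statement10 (H : SimpleGraph V) (hm : 2 ≤ edgeCount H)
    (ℓ : ℝ) (hℓ : 1 ≤ ℓ) (S T : Finset V) (hS : S.Nonempty) (hT : T.Nonempty)
    (hfar : ∀ s ∈ S, ∀ t ∈ T, ∀ p : H.Walk s t, p.IsPath → ℓ < (p.length : ℝ)) :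
    ∃ Z : Finset V,
      (gvol H Z : ℝ) ≤ (gvol H Finset.univ : ℝ) / 2 ∧
      (gcut H Z : ℝ) ≤ 8 * Real.logb 2 (edgeCount H) / ℓ * (gvol H Z : ℝ) ∧
      (S ⊆ Z ∨ T ⊆ Z) := by
  have hvolU := gvol_univ_eq H
  have hℓ0 : (0 : ℝ) < ℓ := by linarith
  by_cases hα : 8 * Real.logb 2 (edgeCount H) < ℓ
  · -- growth case
    set k := ⌊ℓ / 2⌋₊ with hkdef
    have hk : ℓ / 2 < (k : ℝ) + 1 := by
      exact_mod_cast Nat.lt_floor_add_one (ℓ / 2)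
    have h2k : 2 * (k : ℝ) ≤ ℓ := by
      have := Nat.floor_le (by positivity : (0 : ℝ) ≤ ℓ / 2)
      rw [← hkdef] at this
      linarith
    have hdisjB : Disjoint (ball H S k) (ball H T k) := by
      rw [Finset.disjoint_left]
      intro v hvS hvT
      obtain ⟨-, s, hs, w1, hw1⟩ := Finset.mem_filter.1 hvS
      obtain ⟨-, t, ht, w2, hw2⟩ := Finset.mem_filter.1 hvT
      have hp := hfar s hs t ht (w1.append w2.reverse).bypass
        ((w1.append w2.reverse).bypass_isPath)
      have hlen : ((w1.append w2.reverse).bypass.length : ℝ) ≤ 2 * (k : ℝ) := by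
        have h1 := SimpleGraph.Walk.length_bypass_le (w1.append w2.reverse)
        have h2 : (w1.append w2.reverse).length = w1.length + w2.length := by
          rw [SimpleGraph.Walk.length_append, SimpleGraph.Walk.length_reverse]
        have h3 : (w1.append w2.reverse).bypass.length ≤ 2 * k := by omega
        exact_mod_cast h3
      linarith
    have hsum : gvol H (ball H S k) + gvol H (ball H T k) ≤ gvol H Finset.univ := by
      unfold gvol
      rw [← Finset.sum_union hdisjB]
      exact Finset.sum_le_sum_of_subset (Finset.subset_univ _)
    rcases le_total (gvol H (ball H S k)) (gvol H (ball H T k)) with h | h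
    · obtain ⟨Z, h1, h2, h3⟩ := side H (edgeCount H) hm hvolU ℓ hα S k hk (by
        have h' : gvol H (ball H S k) + gvol H (ball H S k) ≤ gvol H Finset.univ :=
          le_trans (by omega) hsum
        have h'' : (gvol H (ball H S k) : ℝ) + (gvol H (ball H S k) : ℝ)
            ≤ (gvol H Finset.univ : ℝ) := by exact_mod_cast h'
        linarith)
      exact ⟨Z, h1, h2, Or.inl h3⟩
    · obtain ⟨Z, h1, h2, h3⟩ := side H (edgeCount H) hm hvolU ℓ hα T k hk (by
        have h' : gvol H (ball H T k) + gvol H (ball H T k) ≤ gvol H Finset.univ :=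
          le_trans (by omega) hsum
        have h'' : (gvol H (ball H T k) : ℝ) + (gvol H (ball H T k) : ℝ)
            ≤ (gvol H Finset.univ : ℝ) := by exact_mod_cast h'
        linarith)
      exact ⟨Z, h1, h2, Or.inr h3⟩
  · -- trivial case: the factor is at least 1
    push_neg at hα
    have hα1 : (1 : ℝ) ≤ 8 * Real.logb 2 (edgeCount H) / ℓ := by
      rw [le_div_iff₀ hℓ0]; linarith
    have hdisjST : Disjoint S T := by
      rw [Finset.disjoint_left]
      intro a haS haT
      have := hfar a haS a haT SimpleGraph.Walk.nil SimpleGraph.Walk.IsPath.nil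
      simp only [SimpleGraph.Walk.length_nil, Nat.cast_zero] at this
      linarith
    have hsum : gvol H S + gvol H T ≤ gvol H Finset.univ := by
      unfold gvol
      rw [← Finset.sum_union hdisjST]
      exact Finset.sum_le_sum_of_subset (Finset.subset_univ _)
    rcases le_total (gvol H S) (gvol H T) with h | h
    · refine ⟨S, ?_, ?_, Or.inl subset_rfl⟩
      · have h' : gvol H S + gvol H S ≤ gvol H Finset.univ := le_trans (by omega) hsum
        have h'' : (gvol H S : ℝ) + (gvol H S : ℝ) ≤ (gvol H Finset.univ : ℝ) := by
          exact_mod_cast h'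
        linarith
      · have hc : (gcut H S : ℝ) ≤ (gvol H S : ℝ) := by exact_mod_cast gcut_le_gvol H S
        nlinarith [(Nat.cast_nonneg (gvol H S) : (0:ℝ) ≤ (gvol H S : ℝ)), hα1, hc]
    · refine ⟨T, ?_, ?_, Or.inr subset_rfl⟩
      · have h' : gvol H T + gvol H T ≤ gvol H Finset.univ := le_trans (by omega) hsum
        have h'' : (gvol H T : ℝ) + (gvol H T : ℝ) ≤ (gvol H Finset.univ : ℝ) := by
          exact_mod_cast h'
        linarith
      · have hc : (gcut H T : ℝ) ≤ (gvol H T : ℝ) := by exact_mod_cast gcut_le_gvol H T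
        nlinarith [(Nat.cast_nonneg (gvol H T) : (0:ℝ) ≤ (gvol H T : ℝ)), hα1, hc]
end
end

section
/- Let G be a finite connected simple graph with edge weights w : E(G) → ℝ≥0, and let K be a connected subgraph of G such that every edge of K has weight 0 and, conversely, every edge of G of weight 0 having at least one endpoint in V(K) is an edge of K. Let M be a minimum-weight spanning tree of G, i.e., a spanning tree of G minimizing the total weight of its edges. Then the graph with vertex set V(K) and edge set E(K) ∩ E(M) is connected; in particular, every two vertices of K are joined in M by a path all of whose edges are weight-0 edges of K. -/
open Finset
open scoped Classical

noncomputable section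

variable {V : Type*} [Fintype V]

private theorem mst_zero_edge_aux (G : SimpleGraph V) (hG : G.Connected)
    (w : Sym2 V → ℝ) (hw : ∀ e, 0 ≤ w e)
    (K : SimpleGraph V) (WK : Finset V)
    (hKG : K ≤ G) (hKsupp : ∀ ⦃u v : V⦄, K.Adj u v → u ∈ WK ∧ v ∈ WK)
    (hK0 : ∀ ⦃u v : V⦄, K.Adj u v → w s(u, v) = 0)
    (h0K : ∀ ⦃u v : V⦄, G.Adj u v → w s(u, v) = 0 → (u ∈ WK ∨ v ∈ WK) → K.Adj u v)
    (M : SimpleGraph V) (hMG : M ≤ G) (hMtree : M.IsTree)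
    (hMmin : ∀ M' : SimpleGraph V, M' ≤ G → M'.IsTree →
      ∑ e ∈ M.edgeFinset, w e ≤ ∑ e ∈ M'.edgeFinset, w e)
    (a b : V) (hab : K.Adj a b) : (K ⊓ M).Reachable a b := by
  by_contra hnr
  have haWK : a ∈ WK := (hKsupp hab).1
  have hGab : G.Adj a b := hKG hab
  have hne : a ≠ b := hGab.ne
  set S : Set V := {v | (K ⊓ M).Reachable a v} with hS
  have haS : a ∈ S := SimpleGraph.Reachable.refl a
  have hbS : b ∉ S := hnr
  have hWKwalk : ∀ u v : V, (K ⊓ M).Walk u v → u ∈ WK → v ∈ WK := by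
    intro u v q
    induction q with
    | nil => exact id
    | cons h q ih => exact fun _ => ih ((hKsupp h.1).2)
  have hSWK : ∀ v ∈ S, v ∈ WK := fun v hv => hv.elim fun q => hWKwalk a v q haWK
  -- unique path from a to b in M
  obtain ⟨p, hp, hpuniq⟩ := hMtree.existsUnique_path a b
  obtain ⟨d, hd, hdS, hdS'⟩ := p.exists_boundary_dart S haS hbS
  obtain ⟨⟨x, y⟩, hMxy⟩ := d
  replace hdS : x ∈ S := hdS
  replace hdS' : y ∉ S := hdS'
  have he_mem_p : s(x, y) ∈ p.edges := by
    exact List.mem_map_of_mem (f := SimpleGraph.Dart.edge) hd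
  have he_M : s(x, y) ∈ M.edgeSet := hMxy
  have hxWK : x ∈ WK := hSWK x hdS
  have he'_not_M : s(a, b) ∉ M.edgeSet := by
    intro h
    exact hnr (SimpleGraph.Adj.reachable ⟨hab, h⟩)
  set D : SimpleGraph V := M.deleteEdges {s(x, y)} with hD
  have hD_le_M : D ≤ M := SimpleGraph.deleteEdges_le _
  have hKM_le_D : K ⊓ M ≤ D := by
    intro u v huv
    rw [hD, SimpleGraph.deleteEdges_adj]
    refine ⟨huv.2, ?_⟩
    intro hmem
    rw [Set.mem_singleton_iff, Sym2.eq_iff] at hmem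
    rcases hmem with ⟨rfl, rfl⟩ | ⟨rfl, rfl⟩
    · exact hdS' (hdS.trans huv.reachable)
    · exact hdS' (hdS.trans huv.symm.reachable)
  have hnab_D : ¬ D.Reachable a b := by
    rintro ⟨q⟩
    have hq' : ∀ f ∈ q.toPath.1.edges, f ∈ M.edgeSet := by
      intro f hf
      have := q.toPath.1.edges_subset_edgeSet hf
      rw [hD, SimpleGraph.edgeSet_deleteEdges] at this
      exact this.1
    have hpath : ((q.toPath.1).transfer M hq').IsPath :=
      (q.toPath.2).transfer hq'
    have heqp := hpuniq _ hpath
    have heq : s(x, y) ∈ ((q.toPath.1).transfer M hq').edges := heqp ▸ he_mem_p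
    rw [SimpleGraph.Walk.edges_transfer] at heq
    have := q.toPath.1.edges_subset_edgeSet heq
    rw [hD, SimpleGraph.edgeSet_deleteEdges] at this
    exact this.2 rfl
  have hax_D : D.Reachable a x := hdS.mono hKM_le_D
  have hstep : ∀ u v : V, M.Walk u v →
      (D.Reachable v x ∨ D.Reachable v y) → D.Reachable u x ∨ D.Reachable u y := by
    intro u v q
    induction q with
    | nil => exact id
    | @cons u c _ h q ih =>
      intro hv
      have ihv := ih hv
      by_cases hc : s(u, c) = s(x, y)
      · rw [Sym2.eq_iff] at hc
        rcases hc with ⟨rfl, rfl⟩ | ⟨rfl, rfl⟩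
        · exact Or.inl (SimpleGraph.Reachable.refl _)
        · exact Or.inr (SimpleGraph.Reachable.refl _)
      · have hadj : D.Adj u c := by
          rw [hD, SimpleGraph.deleteEdges_adj]
          exact ⟨h, by simpa using hc⟩
        rcases ihv with h1 | h1
        · exact Or.inl (hadj.reachable.trans h1)
        · exact Or.inr (hadj.reachable.trans h1)
  have hcomp : ∀ v : V, D.Reachable v x ∨ D.Reachable v y := fun v =>
    (hMtree.isConnected v x).elim fun q =>
      hstep v x q (Or.inl (SimpleGraph.Reachable.refl x))
  have hby_D : D.Reachable b y := by
    rcases hcomp b with h1 | h1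
    · exact absurd (hax_D.trans h1.symm) hnab_D
    · exact h1
  -- the swapped spanning tree
  set M' : SimpleGraph V := D ⊔ SimpleGraph.edge a b with hM'
  have hedge_le : SimpleGraph.edge a b ≤ G := by
    intro u v h
    rw [SimpleGraph.edge_adj] at h
    rcases h.1 with ⟨rfl, rfl⟩ | ⟨rfl, rfl⟩
    · exact hGab
    · exact hGab.symm
  have hM'G : M' ≤ G := sup_le (hD_le_M.trans hMG) hedge_le
  have hM'ab : M'.Adj a b :=
    Or.inr ((SimpleGraph.edge_adj a b a b).mpr ⟨Or.inl ⟨rfl, rfl⟩, hne⟩)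
  have hall : ∀ v, M'.Reachable v a := by
    intro v
    rcases hcomp v with h1 | h1
    · exact (h1.mono le_sup_left).trans ((hax_D.symm).mono le_sup_left)
    · exact ((h1.mono le_sup_left).trans ((hby_D.symm).mono le_sup_left)).trans
        hM'ab.symm.reachable
  have hM'conn : M'.Connected := by
    have : Nonempty V := hG.nonempty
    exact ⟨fun u v => (hall u).trans (hall v).symm⟩
  have hM'acyc : M'.IsAcyclic := by
    intro v c hc
    by_cases hcab : s(a, b) ∈ c.edges
    · obtain ⟨-, hreach⟩ :=
        SimpleGraph.adj_and_reachable_delete_edges_iff_exists_cycle.mpr ⟨v, c, hc, hcab⟩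
      have hle : M' \ SimpleGraph.fromEdgeSet {s(a, b)} ≤ D := by
        intro u u' h
        rcases h.1 with h2 | h2
        · exact h2
        · exfalso
          apply h.2
          rw [SimpleGraph.fromEdgeSet_adj]
          rw [SimpleGraph.edge_adj] at h2
          refine ⟨?_, h2.2⟩
          rcases h2.1 with ⟨rfl, rfl⟩ | ⟨rfl, rfl⟩
          · rfl
          · exact Sym2.eq_swap
      exact hnab_D (hreach.mono hle)
    · have hce : ∀ f ∈ c.edges, f ∈ M.edgeSet := by
        intro f hf
        have h1 := c.edges_subset_edgeSet hf
        rw [hM', SimpleGraph.edgeSet_sup, hD, SimpleGraph.edgeSet_deleteEdges,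
          SimpleGraph.edge_edgeSet_of_ne hne] at h1
        rcases h1 with h1 | h1
        · exact h1.1
        · exact absurd (h1 ▸ hf) hcab
      exact hMtree.2 (c.transfer M hce) (hc.transfer hce)
  have hM'tree : M'.IsTree := ⟨hM'conn, hM'acyc⟩
  have hES : ∀ (inst : Fintype ↑(M'.edgeSet)),
      @SimpleGraph.edgeFinset V M' inst = insert s(a, b) (M.edgeFinset.erase s(x, y)) := by
    intro inst
    ext f
    rw [SimpleGraph.mem_edgeFinset]
    simp only [hM', SimpleGraph.edgeSet_sup, hD,
      SimpleGraph.edgeSet_deleteEdges, SimpleGraph.edge_edgeSet_of_ne hne,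
      Finset.mem_insert, Finset.mem_erase, Set.mem_union, Set.mem_diff,
      Set.mem_singleton_iff, SimpleGraph.mem_edgeFinset]
    tauto
  have h1 : s(a, b) ∉ M.edgeFinset.erase s(x, y) := by
    intro h
    exact he'_not_M (SimpleGraph.mem_edgeFinset.mp (Finset.mem_of_mem_erase h))
  have hxyM : s(x, y) ∈ M.edgeFinset := SimpleGraph.mem_edgeFinset.mpr he_M
  have hmin := hMmin M' hM'G hM'tree
  rw [hES _, Finset.sum_insert h1, Finset.sum_erase_eq_sub hxyM, hK0 hab] at hmin
  have hwxy : w s(x, y) = 0 := le_antisymm (by linarith) (hw _)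
  have hKxy : K.Adj x y := h0K (hMG hMxy) hwxy (Or.inl hxWK)
  exact hdS' (hdS.trans (SimpleGraph.Adj.reachable ⟨hKxy, hMxy⟩))


/-- Let `G` be a finite connected simple graph with nonnegative edge weights `w`,
and let `K` be a connected subgraph of `G` (with vertex set `WK`) all of whose edges
have weight `0`, such that conversely every weight-`0` edge of `G` with an endpoint
in `WK` is an edge of `K`.  If `M` is a minimum-weight spanning tree of `G`, then
the graph with vertex set `WK` and edge set `E(K) ∩ E(M)` is connected: every two
vertices of `K` are joined in `M` by a path consisting of weight-`0` edges of `K`. -/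
theorem statement16 (G : SimpleGraph V) (hG : G.Connected)
    (w : Sym2 V → ℝ) (hw : ∀ e, 0 ≤ w e)
    (K : SimpleGraph V) (WK : Finset V)
    (hKG : K ≤ G) (hKsupp : ∀ ⦃u v : V⦄, K.Adj u v → u ∈ WK ∧ v ∈ WK)
    (hKconn : ∀ u ∈ WK, ∀ v ∈ WK, K.Reachable u v)
    (hK0 : ∀ ⦃u v : V⦄, K.Adj u v → w s(u, v) = 0)
    (h0K : ∀ ⦃u v : V⦄, G.Adj u v → w s(u, v) = 0 → (u ∈ WK ∨ v ∈ WK) → K.Adj u v)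
    (M : SimpleGraph V) (hMG : M ≤ G) (hMtree : M.IsTree)
    (hMmin : ∀ M' : SimpleGraph V, M' ≤ G → M'.IsTree →
      ∑ e ∈ M.edgeFinset, w e ≤ ∑ e ∈ M'.edgeFinset, w e) :
    ∀ u ∈ WK, ∀ v ∈ WK, (K ⊓ M).Reachable u v := by
  have hkey : ∀ u v : V, K.Walk u v → (K ⊓ M).Reachable u v := by
    intro u v q
    induction q with
    | nil => exact SimpleGraph.Reachable.refl _
    | cons h q ih =>
      exact (mst_zero_edge_aux G hG w hw K WK hKG hKsupp hK0 h0K M hMG hMtree hMmin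
        _ _ h).trans ih
  intro u hu v hv
  obtain ⟨q⟩ := hKconn u hu v hv
  exact hkey u v q
end
end
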